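/- Let m = 2ℓ and let τ be the composition of a semilinear automorphism of subspace lattices with orthogonal complement (a contravariant correlation), so that τ reverses inclusions, satisfies dim τ(X) = m − dim X, and τ(X ∩ Y) = τ(X) + τ(Y). Then τ maps Ω_α^𝒜 onto itself only if α = {m+1−j : j ∉ α}. -/

import Mathlib

open Module

section Helpers

lemma card_filter_val_lt (n j : ℕ) (hj : j ≤ n) :
    ((Finset.univ : Finset (Fin n)).filter (fun i : Fin n => (i : ℕ) < j)).card = j := by
  have h1 : ((Finset.univ : Finset (Fin n)).filter (fun i : Fin n => (i : ℕ) < j)).card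
      = (((Finset.univ : Finset (Fin n)).filter (fun i : Fin n => (i : ℕ) < j)).image Fin.val).card := by
    rw [Finset.card_image_of_injective _ Fin.val_injective]
  rw [h1]
  have h2 : ((Finset.univ : Finset (Fin n)).filter (fun i : Fin n => (i : ℕ) < j)).image Fin.val
      = Finset.range j := by
    ext x
    simp only [Finset.mem_image, Finset.mem_filter, Finset.mem_univ, true_and, Finset.mem_range]
    constructor
    · rintro ⟨i, hi, rfl⟩; exact hi
    · intro hx; exact ⟨⟨x, lt_of_lt_of_le hx hj⟩, hx, rfl⟩
  rw [h2, Finset.card_range]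

-- threshold lemma for strict mono sequences
lemma strictMono_threshold {n : ℕ} (f : Fin n → ℕ) (hf : StrictMono f) (j : Fin n) (u : ℕ) :
    f j ≤ u ↔ (j : ℕ) + 1 ≤ ((Finset.univ : Finset (Fin n)).filter (fun i : Fin n => f i ≤ u)).card := by
  constructor
  · intro h
    have hsub : (Finset.univ : Finset (Fin n)).filter (fun i : Fin n => (i : ℕ) < (j:ℕ)+1)
        ⊆ (Finset.univ : Finset (Fin n)).filter (fun i : Fin n => f i ≤ u) := by
      intro i hi
      simp only [Finset.mem_filter, Finset.mem_univ, true_and] at *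
      have : i ≤ j := by omega
      exact le_trans (hf.monotone this) h
    have := Finset.card_le_card hsub
    rwa [card_filter_val_lt n ((j:ℕ)+1) j.isLt] at this
  · intro h
    by_contra hc
    push_neg at hc
    have hsub : (Finset.univ : Finset (Fin n)).filter (fun i : Fin n => f i ≤ u)
        ⊆ (Finset.univ : Finset (Fin n)).filter (fun i : Fin n => (i : ℕ) < (j:ℕ)) := by
      intro i hi
      simp only [Finset.mem_filter, Finset.mem_univ, true_and] at *
      by_contra hij
      push_neg at hij
      have : f j ≤ f i := hf.monotone (by exact_mod_cast hij)
      omega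
    have := Finset.card_le_card hsub
    rw [card_filter_val_lt n (j:ℕ) (le_of_lt j.isLt)] at this
    omega

-- gap lemma
lemma strictMono_gap {n : ℕ} (f : Fin n → ℕ) (hf : StrictMono f) (j t : Fin n) (h : j ≤ t) :
    f j + (t : ℕ) ≤ f t + (j : ℕ) := by
  obtain ⟨d, hd⟩ : ∃ d, (t:ℕ) = (j:ℕ) + d := ⟨(t:ℕ) - (j:ℕ), by omega⟩
  induction d generalizing t with
  | zero => have : j = t := by apply Fin.ext; omega
            subst this; omega
  | succ d ih =>
      have htpos : 0 < (t:ℕ) := by omega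
      set t' : Fin n := ⟨(t:ℕ) - 1, by omega⟩ with ht'
      have h1 : f t' < f t := hf (by simp [ht', Fin.lt_def]; omega)
      have h2 := ih t' (by simp [ht', Fin.le_def]; omega) (by simp [ht']; omega)
      simp [ht'] at h1 h2 ⊢
      omega

end Helpers

set_option linter.unusedSectionVars false

section LA
variable {F : Type*} [Field F] {V : Type*} [AddCommGroup V] [Module F V] [FiniteDimensional F V]

lemma rank_ident (X Y : Submodule F V) :
    finrank F ↥(X ⊔ Y) + finrank F ↥(X ⊓ Y) = finrank F ↥X + finrank F ↥Y :=
  Submodule.finrank_sup_add_finrank_inf_eq X Y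

-- Lipschitz : X ≤ Y → dim(W⊓Y) + dim X ≤ dim(W⊓X) + dim Y
lemma lip (W X Y : Submodule F V) (h : X ≤ Y) :
    finrank F ↥(W ⊓ Y) + finrank F ↥X ≤ finrank F ↥(W ⊓ X) + finrank F ↥Y := by
  have h1 : (W ⊓ Y) ⊓ X = W ⊓ X := by
    rw [inf_assoc]
    congr 1
    exact inf_eq_right.mpr h
  have h2 := rank_ident (W ⊓ Y) X
  have h3 : (W ⊓ Y) ⊔ X ≤ Y := sup_le inf_le_right h
  have h4 := Submodule.finrank_mono h3
  rw [h1] at h2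
  omega

lemma exists_notmem (X Y : Submodule F V) (h : finrank F ↥X < finrank F ↥Y) :
    ∃ v, v ∈ Y ∧ v ∉ X := by
  have : ¬ (Y ≤ X) := fun hle => absurd (Submodule.finrank_mono hle) (by omega)
  exact SetLike.not_le_iff_exists.mp this

lemma dim_sup_span (W : Submodule F V) (v : V) (hv : v ∉ W) :
    finrank F ↥(W ⊔ Submodule.span F {v}) = finrank F ↥W + 1 := by
  have hv0 : v ≠ 0 := fun h => hv (h ▸ W.zero_mem)
  have hspan : finrank F ↥(Submodule.span F {v}) = 1 := finrank_span_singleton hv0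
  have hinf : W ⊓ Submodule.span F {v} = ⊥ := by
    rw [eq_bot_iff]
    intro x hx
    obtain ⟨hxW, hxs⟩ := hx
    obtain ⟨c, rfl⟩ := Submodule.mem_span_singleton.mp hxs
    rcases eq_or_ne c 0 with rfl | hc
    · simp
    · refine absurd (?_ : v ∈ W) hv
      have := W.smul_mem c⁻¹ hxW
      rwa [smul_smul, inv_mul_cancel₀ hc, one_smul] at this
  have := rank_ident W (Submodule.span F {v})
  rw [hinf] at this
  simp only [finrank_bot] at this
  omega

lemma inf_eq_of_avoid (W U : Submodule F V) (v : V) (hv : v ∉ W ⊔ U) :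
    (W ⊔ Submodule.span F {v}) ⊓ U = W ⊓ U := by
  apply le_antisymm
  · rintro x ⟨hx1, hx2⟩
    obtain ⟨w, hw, z, hz, rfl⟩ := Submodule.mem_sup.mp hx1
    obtain ⟨c, rfl⟩ := Submodule.mem_span_singleton.mp hz
    rcases eq_or_ne c 0 with rfl | hc
    · simp only [zero_smul, add_zero] at hx2 ⊢; exact ⟨hw, hx2⟩
    · exfalso
      apply hv
      have : c • v = (w + c • v) - w := by abel
      have hcv : c • v ∈ W ⊔ U := by
        rw [this]
        exact sub_mem (Submodule.mem_sup_right hx2) (Submodule.mem_sup_left hw)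
      have := (W ⊔ U).smul_mem c⁻¹ hcv
      simpa [hc] using this
  · exact inf_le_inf_right U le_sup_left

-- dim((W ⊔ span v) ⊓ U) ≤ dim(W⊓U) + 1
lemma inf_sup_span_le (W U : Submodule F V) (v : V) :
    finrank F ↥((W ⊔ Submodule.span F {v}) ⊓ U) ≤ finrank F ↥(W ⊓ U) + 1 := by
  have h := lip U W (W ⊔ Submodule.span F {v}) le_sup_left
  have h2 : finrank F ↥(W ⊔ Submodule.span F {v}) ≤ finrank F ↥W + 1 := by
    rcases em (v ∈ W) with hv | hv
    · have : W ⊔ Submodule.span F {v} = W := by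
        rw [sup_eq_left]
        rwa [Submodule.span_singleton_le_iff_mem]
      rw [this]; omega
    · rw [dim_sup_span W v hv]
  calc finrank F ↥((W ⊔ Submodule.span F {v}) ⊓ U)
      = finrank F ↥(U ⊓ (W ⊔ Submodule.span F {v})) := by rw [inf_comm]
    _ ≤ finrank F ↥(U ⊓ W) + 1 := by omega
    _ = finrank F ↥(W ⊓ U) + 1 := by rw [inf_comm]

lemma exists_intermediate (X Y : Submodule F V) (hXY : X ≤ Y) (d : ℕ)
    (h1 : finrank F ↥X ≤ d) (h2 : d ≤ finrank F ↥Y) :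
    ∃ Z, X ≤ Z ∧ Z ≤ Y ∧ finrank F ↥Z = d := by
  induction d with
  | zero =>
      refine ⟨X, le_refl _, hXY, by omega⟩
  | succ d ih =>
      rcases Nat.lt_or_ge d (finrank F ↥X) with hlt | hge
      · have : finrank F ↥X = d + 1 := by omega
        exact ⟨X, le_refl _, hXY, this⟩
      · obtain ⟨Z, hXZ, hZY, hZ⟩ := ih hge (by omega)
        obtain ⟨v, hvY, hvZ⟩ := exists_notmem Z Y (by omega)
        refine ⟨Z ⊔ Submodule.span F {v}, le_trans hXZ le_sup_left,
          sup_le hZY (by rwa [Submodule.span_singleton_le_iff_mem]), ?_⟩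
        rw [dim_sup_span Z v hvZ, hZ]

end LA

section LA2
variable {F : Type*} [Field F] {V : Type*} [AddCommGroup V] [Module F V] [FiniteDimensional F V]

/-- witness builder -/
lemma build (L : ℕ) (G : Fin L → Submodule F V) (hG : Monotone G)
    (hdim : ∀ t : Fin L, (t : ℕ) + 1 ≤ finrank F ↥(G t)) (U : Submodule F V) :
    ∃ W : Submodule F V, finrank F ↥W = L ∧
      (∀ t : Fin L, (t : ℕ) + 1 ≤ finrank F ↥(W ⊓ G t)) ∧
      (∀ j, j + 1 ≤ finrank F ↥(W ⊓ U) →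
        ∃ t : Fin L, j ≤ (t : ℕ) ∧ finrank F ↥(G t) + j ≤ finrank F ↥U + (t : ℕ)) := by
  have aux : ∀ n, n ≤ L → ∃ W : Submodule F V, finrank F ↥W = n ∧
      (∀ t : Fin L, min n ((t : ℕ) + 1) ≤ finrank F ↥(W ⊓ G t)) ∧
      (∀ j, j + 1 ≤ finrank F ↥(W ⊓ U) →
        ∃ t : Fin L, (t : ℕ) < n ∧ j ≤ (t : ℕ) ∧
          finrank F ↥(G t) + j ≤ finrank F ↥U + (t : ℕ)) := by
    intro n
    induction n with
    | zero =>
        intro _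
        refine ⟨⊥, finrank_bot F V, ?_, ?_⟩
        · intro t; simp
        · intro j hj
          exfalso
          have : (⊥ : Submodule F V) ⊓ U = ⊥ := bot_inf_eq U
          rw [this] at hj
          simp [finrank_bot] at hj
    | succ n ih =>
        intro hn
        obtain ⟨W, hWd, hWG, hWU⟩ := ih (by omega)
        set tn : Fin L := ⟨n, by omega⟩ with htn
        -- choose v in G tn
        rcases em (G tn ≤ W ⊔ U) with hforced | hfree
        · -- forced step
          obtain ⟨v, hvG, hvW⟩ := exists_notmem W (G tn) (by rw [hWd]; exact hdim tn)
          refine ⟨W ⊔ Submodule.span F {v}, ?_, ?_, ?_⟩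
          · rw [dim_sup_span W v hvW, hWd]
          · intro t
            rcases Nat.lt_or_ge (t : ℕ) n with hlt | hge
            · have h1 := hWG t
              have h2 : W ⊓ G t ≤ (W ⊔ Submodule.span F {v}) ⊓ G t :=
                inf_le_inf_right _ le_sup_left
              have := Submodule.finrank_mono h2
              omega
            · -- t ≥ n : v ∈ G t
              have hvGt : v ∈ G t := hG (by simp [htn, Fin.le_def]; omega) hvG
              have hsub : (W ⊓ G t) ⊔ Submodule.span F {v} ≤ (W ⊔ Submodule.span F {v}) ⊓ G t := by
                apply le_inf
                · exact sup_le (le_trans inf_le_left le_sup_left) le_sup_right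
                · exact sup_le inf_le_right (by rwa [Submodule.span_singleton_le_iff_mem])
              have hvnm : v ∉ W ⊓ G t := fun h => hvW h.1
              have hd := dim_sup_span (W ⊓ G t) v hvnm
              have := Submodule.finrank_mono hsub
              have h1 := hWG t
              omega
          · intro j hj
            have hle := inf_sup_span_le W U v
            rcases Nat.lt_or_ge (j + 1) (finrank F ↥(W ⊓ U) + 1) with hlt | hge
            · obtain ⟨t, ht1, ht2, ht3⟩ := hWU j (by omega)
              exact ⟨t, by omega, ht2, ht3⟩
            · -- j = finrank (W ⊓ U)
              have hj' : j = finrank F ↥(W ⊓ U) := by omega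
              refine ⟨tn, by simp [htn], ?_, ?_⟩
              · have : finrank F ↥(W ⊓ U) ≤ finrank F ↥W := Submodule.finrank_mono inf_le_left
                simp [htn]; omega
              · -- forced: G tn ≤ W ⊔ U
                have h1 := Submodule.finrank_mono hforced
                have h2 := rank_ident W U
                simp [htn]
                omega
        · -- free step
          obtain ⟨v, hvG, hvWU⟩ := SetLike.not_le_iff_exists.mp hfree
          have hvW : v ∉ W := fun h => hvWU (Submodule.mem_sup_left h)
          refine ⟨W ⊔ Submodule.span F {v}, ?_, ?_, ?_⟩
          · rw [dim_sup_span W v hvW, hWd]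
          · intro t
            rcases Nat.lt_or_ge (t : ℕ) n with hlt | hge
            · have h1 := hWG t
              have := Submodule.finrank_mono
                (inf_le_inf_right (G t) (le_sup_left : W ≤ W ⊔ Submodule.span F {v}))
              omega
            · have hvGt : v ∈ G t := hG (by simp [htn, Fin.le_def]; omega) hvG
              have hsub : (W ⊓ G t) ⊔ Submodule.span F {v} ≤ (W ⊔ Submodule.span F {v}) ⊓ G t := by
                apply le_inf
                · exact sup_le (le_trans inf_le_left le_sup_left) le_sup_right
                · exact sup_le inf_le_right (by rwa [Submodule.span_singleton_le_iff_mem])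
              have hvnm : v ∉ W ⊓ G t := fun h => hvW h.1
              have hd := dim_sup_span (W ⊓ G t) v hvnm
              have := Submodule.finrank_mono hsub
              have h1 := hWG t
              omega
          · intro j hj
            rw [inf_eq_of_avoid W U v hvWU] at hj
            obtain ⟨t, ht1, ht2, ht3⟩ := hWU j hj
            exact ⟨t, by omega, ht2, ht3⟩
  obtain ⟨W, h1, h2, h3⟩ := aux L (le_refl L)
  refine ⟨W, h1, ?_, ?_⟩
  · intro t
    have := h2 t
    have ht := t.isLt
    omega
  · intro j hj
    obtain ⟨t, _, ht2, ht3⟩ := h3 j hj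
    exact ⟨t, ht2, ht3⟩

/-- chain construction -/
lemma chain_build (L : ℕ) (T : Fin L → Submodule F V) (hT : Monotone T)
    (b : Fin L → ℕ) (hb : Monotone b) (hbT : ∀ r, b r ≤ finrank F ↥(T r)) :
    ∃ B : Fin L → Submodule F V, Monotone B ∧ (∀ r, finrank F ↥(B r) = b r) ∧
      ∀ r, B r ≤ T r := by
  have aux : ∀ n, n ≤ L → ∃ B : Fin L → Submodule F V,
      (∀ r r' : Fin L, (r':ℕ) = (r:ℕ) + 1 → (r:ℕ) + 1 < n → B r ≤ B r') ∧
      (∀ r : Fin L, (r:ℕ) < n → finrank F ↥(B r) = b r) ∧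
      (∀ r : Fin L, (r:ℕ) < n → B r ≤ T r) := by
    intro n
    induction n with
    | zero => exact fun _ => ⟨fun _ => ⊥, fun r r' _ h => absurd h (by omega),
        fun r h => absurd h (by omega), fun r h => absurd h (by omega)⟩
    | succ n ih =>
        intro hn
        obtain ⟨B, hB1, hB2, hB3⟩ := ih (by omega)
        set rn : Fin L := ⟨n, by omega⟩ with hrn
        have hexz : ∃ Z, (if h : 0 < n then B ⟨n-1, by omega⟩ else ⊥) ≤ Z ∧ Z ≤ T rn ∧
            finrank F ↥Z = b rn := by
          rcases Nat.eq_zero_or_pos n with h0 | hpos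
          · simp only [h0, dif_neg (lt_irrefl 0)]
            exact exists_intermediate ⊥ (T rn) bot_le (b rn)
              (by simp [finrank_bot]) (hbT rn)
          · simp only [dif_pos hpos]
            set rp : Fin L := ⟨n-1, by omega⟩ with hrp
            have h1 : B rp ≤ T rp := hB3 rp (by simp [hrp]; omega)
            have h2 : B rp ≤ T rn := le_trans h1 (hT (by simp [hrp, hrn, Fin.le_def]))
            refine exists_intermediate (B rp) (T rn) h2 (b rn) ?_ (hbT rn)
            have := hB2 rp (by simp [hrp]; omega)
            rw [this]
            exact hb (by simp [hrp, hrn, Fin.le_def])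
        obtain ⟨Z, hZ1, hZ2, hZ3⟩ := hexz
        refine ⟨fun r => if (r:ℕ) = n then Z else B r, ?_, ?_, ?_⟩
        · intro r r' heq hr
          show (if (r:ℕ) = n then Z else B r) ≤ (if (r':ℕ) = n then Z else B r')
          rcases Nat.lt_or_ge ((r:ℕ)+1) n with hlt | hge
          · rw [if_neg (by omega), if_neg (by omega)]
            exact hB1 r r' heq hlt
          · have heq2 : (r':ℕ) = n := by omega
            rw [if_neg (by omega), if_pos heq2]
            have hpos : 0 < n := by omega
            rw [dif_pos hpos] at hZ1
            have hr1 : r = (⟨n-1, by omega⟩ : Fin L) := Fin.ext (by simp; omega)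
            rw [hr1]
            exact hZ1
        · intro r hr
          show finrank F ↥(if (r:ℕ) = n then Z else B r) = b r
          rcases Nat.lt_or_ge (r:ℕ) n with hlt | hge
          · rw [if_neg (by omega)]; exact hB2 r hlt
          · have hr' : (r:ℕ) = n := by omega
            rw [if_pos hr']
            have : r = rn := Fin.ext hr'
            rw [this] at *
            exact hZ3
        · intro r hr
          show (if (r:ℕ) = n then Z else B r) ≤ T r
          rcases Nat.lt_or_ge (r:ℕ) n with hlt | hge
          · rw [if_neg (by omega)]; exact hB3 r hlt
          · have hr' : (r:ℕ) = n := by omega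
            rw [if_pos hr']
            have : r = rn := Fin.ext hr'
            rw [this]; exact hZ2
  obtain ⟨B, h1, h2, h3⟩ := aux L (le_refl L)
  refine ⟨B, ?_, fun r => h2 r r.isLt, fun r => h3 r r.isLt⟩
  intro r r' hrr'
  obtain ⟨d, hd⟩ : ∃ d, (r':ℕ) = (r:ℕ) + d := ⟨(r':ℕ) - (r:ℕ), by omega⟩
  clear hrr'
  induction d generalizing r' with
  | zero => have : r = r' := Fin.ext (by omega); rw [this]
  | succ d ihd =>
      have hlt : (r:ℕ) + d < L := by have := r'.isLt; omega
      set rm : Fin L := ⟨(r:ℕ)+d, hlt⟩ with hrm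
      have step : B rm ≤ B r' := h1 rm r' (by simp [hrm]; omega) (by simp [hrm]; have := r'.isLt; omega)
      have hmid := ihd (r' := rm) (by simp [hrm])
      exact le_trans hmid step


end LA2

set_option maxHeartbeats 1000000 in
theorem correlation_selfmap_index_condition
    (F : Type*) [Field F] (m ℓ : ℕ) (hm : m = 2 * ℓ)
    (τ : Submodule F (Fin m → F) → Submodule F (Fin m → F))
    (hτ_dim : ∀ X, finrank F ↥(τ X) = m - finrank F ↥X)
    (hτ_inf : ∀ X Y, τ (X ⊓ Y) = τ X ⊔ τ Y)
    (hτ_anti : ∀ X Y, X ≤ Y → τ Y ≤ τ X)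
    (hτ_bij : Function.Bijective τ)
    (a : Fin ℓ → ℕ) (ha : StrictMono a) (hrange : ∀ j, 1 ≤ a j ∧ a j ≤ m)
    (A : Fin ℓ → Submodule F (Fin m → F)) (hAmono : StrictMono A)
    (hdA : ∀ i, finrank F ↥(A i) = a i)
    (hself : τ '' {W : Submodule F (Fin m → F) |
        finrank F ↥W = ℓ ∧ ∀ i : Fin ℓ, (i : ℕ) + 1 ≤ finrank F ↥(W ⊓ A i)} =
      {W : Submodule F (Fin m → F) |
        finrank F ↥W = ℓ ∧ ∀ i : Fin ℓ, (i : ℕ) + 1 ≤ finrank F ↥(W ⊓ A i)}) :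
    Finset.univ.image a =
      (Finset.Icc 1 m \ Finset.univ.image a).image (fun j => m + 1 - j) := by
  classical
  have hVm : finrank F (Fin m → F) = m := Module.finrank_fin_fun F
  have hfr : ∀ X : Submodule F (Fin m → F), finrank F ↥X ≤ m := by
    intro X
    have := X.finrank_le
    omega
  -- τ facts
  have hback : ∀ X Y, τ X ≤ τ Y → Y ≤ X := by
    intro X Y h
    have h1 : τ (X ⊓ Y) = τ Y := by rw [hτ_inf]; exact sup_eq_right.mpr h
    have h2 : X ⊓ Y = Y := hτ_bij.1 h1
    conv_lhs => rw [← h2]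
    exact inf_le_left
  have hsup : ∀ X Y, τ (X ⊔ Y) = τ X ⊓ τ Y := by
    intro X Y
    apply le_antisymm
    · exact le_inf (hτ_anti _ _ le_sup_left) (hτ_anti _ _ le_sup_right)
    · obtain ⟨Z, hZ⟩ := hτ_bij.2 (τ X ⊓ τ Y)
      have hXZ : X ≤ Z := hback _ _ (hZ ▸ inf_le_left : τ Z ≤ τ X)
      have hYZ : Y ≤ Z := hback _ _ (hZ ▸ inf_le_right : τ Z ≤ τ Y)
      have := hτ_anti _ _ (sup_le hXZ hYZ)
      rwa [hZ] at this
  -- preimages of the flag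
  have hD' : ∀ i : Fin ℓ, ∃ D, τ D = A i := fun i => hτ_bij.2 (A i)
  choose D' hD'eq using hD'
  have hdD' : ∀ i, finrank F ↥(D' i) = m - a i := by
    intro i
    have h1 := hτ_dim (D' i)
    rw [hD'eq i, hdA i] at h1
    have := hfr (D' i)
    omega
  have hD'anti : ∀ i i' : Fin ℓ, i ≤ i' → D' i' ≤ D' i := by
    intro i i' h
    apply hback
    rw [hD'eq, hD'eq]
    exact hAmono.monotone h
  -- the Schubert set
  set S : Set (Submodule F (Fin m → F)) := {W : Submodule F (Fin m → F) |
        finrank F ↥W = ℓ ∧ ∀ i : Fin ℓ, (i : ℕ) + 1 ≤ finrank F ↥(W ⊓ A i)} with hSdef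
  have hS1 : ∀ W, W ∈ S → τ W ∈ S := by
    intro W hW
    rw [← hself]
    exact Set.mem_image_of_mem τ hW
  have hS2 : ∀ W, τ W ∈ S → W ∈ S := by
    intro W hW
    rw [← hself] at hW
    obtain ⟨W', hW', hWW⟩ := hW
    rwa [← hτ_bij.1 hWW]
  -- the dual description
  have hdual : ∀ W : Submodule F (Fin m → F), finrank F ↥W = ℓ →
      (W ∈ S ↔ ∀ i : Fin ℓ, ℓ + (i : ℕ) + 1 ≤ a i + finrank F ↥(W ⊓ D' i)) := by
    intro W hW
    have hτWdim : finrank F ↥(τ W) = ℓ := by rw [hτ_dim, hW]; omega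
    have hiff : W ∈ S ↔ τ W ∈ S := ⟨hS1 W, hS2 W⟩
    rw [hiff]
    have hconds : ∀ i : Fin ℓ, ((i : ℕ) + 1 ≤ finrank F ↥(τ W ⊓ A i) ↔
        ℓ + (i : ℕ) + 1 ≤ a i + finrank F ↥(W ⊓ D' i)) := by
      intro i
      have h1 : τ W ⊓ A i = τ (W ⊔ D' i) := by rw [hsup, hD'eq]
      have h2 : finrank F ↥(τ (W ⊔ D' i)) = m - finrank F ↥(W ⊔ D' i) := hτ_dim _
      have h3 := rank_ident W (D' i)
      rw [hW, hdD' i] at h3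
      have h4 := hfr (W ⊔ D' i)
      have h5 := hrange i
      have h6 : (i : ℕ) < ℓ := i.isLt
      rw [h1, h2]
      omega
    constructor
    · rintro ⟨_, h⟩ i; exact (hconds i).mp (h i)
    · intro h; exact ⟨hτWdim, fun i => (hconds i).mpr (h i)⟩
  -- counting setup
  have hsubA : Finset.univ.image a ⊆ Finset.Icc 1 m := by
    intro x hx
    simp only [Finset.mem_image] at hx
    obtain ⟨i, _, rfl⟩ := hx
    simp only [Finset.mem_Icc]
    exact hrange i
  have hcardA : (Finset.univ.image a).card = ℓ := by
    rw [Finset.card_image_of_injective _ ha.injective, Finset.card_univ, Fintype.card_fin]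
  have hcardC : (Finset.Icc 1 m \ Finset.univ.image a).card = ℓ := by
    rw [Finset.card_sdiff_of_subset hsubA, Nat.card_Icc, hcardA]
    omega
  obtain ⟨C, hCdef⟩ : ∃ C, C = Finset.Icc 1 m \ Finset.univ.image a := ⟨_, rfl⟩
  rw [← hCdef]
  rw [← hCdef] at hcardC
  obtain ⟨c, hcmono, hcmem, himc⟩ : ∃ c : Fin ℓ → ℕ, StrictMono c ∧ (∀ s, c s ∈ C) ∧
      Finset.univ.image c = C := by
    refine ⟨fun s => C.orderEmbOfFin hcardC s, (C.orderEmbOfFin hcardC).strictMono,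
      fun s => Finset.orderEmbOfFin_mem C hcardC s, ?_⟩
    apply Finset.coe_injective
    rw [Finset.coe_image, Finset.coe_univ, Set.image_univ]
    exact Finset.range_orderEmbOfFin C hcardC
  have hcrange : ∀ s, 1 ≤ c s ∧ c s ≤ m := by
    intro s
    have := hcmem s
    rw [hCdef, Finset.mem_sdiff, Finset.mem_Icc] at this
    exact this.1
  -- rank identity
  obtain ⟨countA, hcountAdef⟩ : ∃ f : ℕ → ℕ, ∀ u, f u = ((Finset.univ : Finset (Fin ℓ)).filter
      (fun i : Fin ℓ => a i ≤ u)).card := ⟨_, fun _ => rfl⟩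
  obtain ⟨countC, hcountCdef⟩ : ∃ f : ℕ → ℕ, ∀ u, f u = ((Finset.univ : Finset (Fin ℓ)).filter
      (fun i : Fin ℓ => c i ≤ u)).card := ⟨_, fun _ => rfl⟩
  have hR : ∀ u, u ≤ m → countA u + countC u = u := by
    intro u hu
    have h1 : countA u = ((Finset.univ.image a).filter (· ≤ u)).card := by
      rw [hcountAdef, Finset.filter_image, Finset.card_image_of_injective _ ha.injective]
    have h2 : countC u = (C.filter (· ≤ u)).card := by
      rw [hcountCdef, ← himc, Finset.filter_image, Finset.card_image_of_injective _ hcmono.injective]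
    have h3 : C ∪ Finset.univ.image a = Finset.Icc 1 m := by
      rw [hCdef]; exact Finset.sdiff_union_of_subset hsubA
    have h4 : (Finset.Icc 1 m).filter (· ≤ u) = Finset.Icc 1 u := by
      ext x
      simp only [Finset.mem_filter, Finset.mem_Icc]
      omega
    have h5 : ((C ∪ Finset.univ.image a).filter (· ≤ u)).card
        = (C.filter (· ≤ u)).card + ((Finset.univ.image a).filter (· ≤ u)).card := by
      rw [Finset.filter_union]
      refine Finset.card_union_of_disjoint (Finset.disjoint_filter_filter ?_)
      rw [hCdef]
      exact Finset.sdiff_disjoint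
    rw [h3, h4, Nat.card_Icc] at h5
    omega
  have hTa : ∀ (i : Fin ℓ) (u : ℕ), a i ≤ u ↔ (i : ℕ) + 1 ≤ countA u :=
    fun i u => (hcountAdef u) ▸ strictMono_threshold a ha i u
  have hTc : ∀ (s : Fin ℓ) (u : ℕ), c s ≤ u ↔ (s : ℕ) + 1 ≤ countC u :=
    fun s u => (hcountCdef u) ▸ strictMono_threshold c hcmono s u
  have ha_ge : ∀ i : Fin ℓ, (i : ℕ) + 1 ≤ a i := by
    intro i
    have h0 : (0 : ℕ) < ℓ := Nat.pos_of_ne_zero (by rintro rfl; exact absurd i.isLt (by omega))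
    have := strictMono_gap a ha ⟨0, h0⟩ i (by simp [Fin.le_def])
    have := (hrange ⟨0, h0⟩).1
    simp at *
    omega
  have hc_ge : ∀ s : Fin ℓ, (s : ℕ) + 1 ≤ c s := by
    intro s
    have h0 : (0 : ℕ) < ℓ := Nat.pos_of_ne_zero (by rintro rfl; exact absurd s.isLt (by omega))
    have := strictMono_gap c hcmono ⟨0, h0⟩ s (by simp [Fin.le_def])
    have := (hcrange ⟨0, h0⟩).1
    simp at *
    omega
  -- the dual index
  obtain ⟨b, hbdef⟩ : ∃ b : Fin ℓ → ℕ, ∀ r, b r = m + 1 - c r.rev := ⟨_, fun _ => rfl⟩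
  have hrevval : ∀ r : Fin ℓ, ((r.rev : Fin ℓ) : ℕ) = ℓ - 1 - (r : ℕ) := by
    intro r
    have := r.isLt
    simp [Fin.val_rev]
    omega
  have hb_strict : StrictMono b := by
    intro r r' hrr'
    have h1 : r'.rev < r.rev := Fin.rev_lt_rev.mpr hrr'
    have h2 : c r'.rev < c r.rev := hcmono h1
    have h3 := (hcrange r.rev).2
    rw [hbdef r, hbdef r']
    omega
  have hb_range : ∀ r, 1 ≤ b r ∧ b r ≤ m := by
    intro r
    have h1 := (hcrange r.rev).1
    have h2 := (hcrange r.rev).2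
    rw [hbdef r]
    omega
  have hb_ge : ∀ r : Fin ℓ, (r : ℕ) + 1 ≤ b r := by
    intro r
    have h0 : (0 : ℕ) < ℓ := Nat.pos_of_ne_zero (by rintro rfl; exact absurd r.isLt (by omega))
    have := strictMono_gap b hb_strict ⟨0, h0⟩ r (by simp [Fin.le_def])
    have := (hb_range ⟨0, h0⟩).1
    simp at *
    omega
  obtain ⟨kk, hkkdef⟩ : ∃ kk : Fin ℓ → ℕ, ∀ r, kk r = b r - ((r : ℕ) + 1) := ⟨_, fun _ => rfl⟩
  obtain ⟨Dhat, hDhat_lt, hDhat_top⟩ :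
      ∃ Dh : ℕ → Submodule F (Fin m → F),
        (∀ k, (h : k < ℓ) → Dh k = D' ⟨ℓ - 1 - k, by omega⟩) ∧
        (∀ k, ℓ ≤ k → Dh k = ⊤) := by
    refine ⟨fun k => if h : k < ℓ then D' ⟨ℓ - 1 - k, by omega⟩ else ⊤, ?_, ?_⟩
    · intro k h; exact dif_pos h
    · intro k h; exact dif_neg (by omega)
  have hDhatmono : ∀ k k', k ≤ k' → Dhat k ≤ Dhat k' := by
    intro k k' h
    rcases Nat.lt_or_ge k' ℓ with h2 | h2
    · rw [hDhat_lt k (by omega), hDhat_lt k' h2]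
      exact hD'anti ⟨ℓ - 1 - k', by omega⟩ ⟨ℓ - 1 - k, by omega⟩ (by simp [Fin.le_def]; omega)
    · rw [hDhat_top k' h2]
      exact le_top
  have hDhatdim_lt : ∀ k, (h : k < ℓ) → finrank F ↥(Dhat k) = m - a ⟨ℓ - 1 - k, by omega⟩ := by
    intro k h
    rw [hDhat_lt k h, hdD']
  have hDhatdim_top : ∀ k, ℓ ≤ k → finrank F ↥(Dhat k) = m := by
    intro k h
    rw [hDhat_top k h, finrank_top, hVm]
  -- key dimension fact
  have hKD : ∀ r : Fin ℓ, b r ≤ finrank F ↥(Dhat (kk r)) := by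
    intro r
    rcases Nat.lt_or_ge (kk r) ℓ with hk | hk
    · set i0 : Fin ℓ := ⟨ℓ - 1 - kk r, by omega⟩ with hi0
      have hd : finrank F ↥(Dhat (kk r)) = m - a i0 := hDhatdim_lt (kk r) hk
      rw [hd]
      -- need a i0 < c r.rev
      set cs : ℕ := c r.rev with hcs
      have hsval := hrevval r
      have hbr := hb_ge r
      have hrlt := r.isLt
      have hcs1 := (hcrange r.rev).1
      have hcs2 := (hcrange r.rev).2
      -- countC (cs - 1) = rev r
      have hCle : countC (cs - 1) ≤ (r.rev : ℕ) := by
        by_contra hcon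
        push_neg at hcon
        have := (hTc r.rev (cs - 1)).mpr (by omega)
        omega
      have hCge : (r.rev : ℕ) ≤ countC (cs - 1) := by
        rcases Nat.eq_zero_or_pos (r.rev : ℕ) with h0 | h0
        · omega
        · set s' : Fin ℓ := ⟨(r.rev : ℕ) - 1, by omega⟩ with hs'
          have hlt : s' < r.rev := by simp [hs', Fin.lt_def]; omega
          have := hcmono hlt
          have := (hTc s' (cs - 1)).mp (by omega)
          simp [hs'] at this
          omega
      have hRc := hR (cs - 1) (by omega)
      have hcountA : countA (cs - 1) = cs - 1 - (r.rev : ℕ) := by omega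
      have hi0a : a i0 ≤ cs - 1 := by
        apply (hTa i0 (cs - 1)).mpr
        rw [hcountA]
        simp only [hi0]
        rw [hkkdef r, hbdef r] at hk ⊢
        omega
      rw [hkkdef r, hbdef r] at hk
      rw [hbdef r]
      omega
    · have hd : finrank F ↥(Dhat (kk r)) = m := hDhatdim_top (kk r) hk
      rw [hd]
      exact (hb_range r).2
  have hkkmono : ∀ r r' : Fin ℓ, r ≤ r' → kk r ≤ kk r' := by
    intro r r' h
    have := strictMono_gap b hb_strict r r' h
    rw [hkkdef r, hkkdef r']
    have := hb_ge r
    have := hb_ge r'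
    omega
  obtain ⟨B, hBmono, hBdim, hBT⟩ := chain_build ℓ (fun r => Dhat (kk r))
    (fun r r' h => hDhatmono _ _ (hkkmono r r' h)) b
    hb_strict.monotone hKD
  -- equivalence of D'-conditions and B-conditions
  have hBd : ∀ W : Submodule F (Fin m → F), finrank F ↥W = ℓ →
      ((∀ i : Fin ℓ, ℓ + (i : ℕ) + 1 ≤ a i + finrank F ↥(W ⊓ D' i)) ↔
       (∀ r : Fin ℓ, (r : ℕ) + 1 ≤ finrank F ↥(W ⊓ B r))) := by
    intro W hW
    constructor
    · -- D' conditions imply B conditions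
      intro hD r
      set s : ℕ := (r.rev : ℕ) with hs
      set cs : ℕ := c r.rev with hcs
      have hsval := hrevval r
      have hbr := hb_ge r
      have hrlt := r.isLt
      have hcs1 := (hcrange r.rev).1
      have hcs2 := (hcrange r.rev).2
      have hcss := hc_ge r.rev
      rcases Nat.lt_or_ge (kk r) ℓ with hk | hk
      · set i : Fin ℓ := ⟨ℓ - 1 - kk r, by omega⟩ with hi
        have hBD : B r ≤ D' i := by
          have h1 := hBT r
          rwa [hDhat_lt (kk r) hk] at h1
        have hcond := hD i
        have hlip := lip W (B r) (D' i) hBD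
        rw [hBdim r, hdD' i] at hlip
        have hai := (hrange i).2
        have hival : (i : ℕ) = ℓ - 1 - kk r := rfl
        have hkk : kk r = b r - ((r : ℕ) + 1) := hkkdef r
        have hbrm := (hb_range r).2
        omega
      · -- kk r ≥ ℓ
        have hlip := lip W (B r) ⊤ le_top
        rw [hBdim r, inf_top_eq, hW, finrank_top, hVm] at hlip
        have hkk : kk r = b r - ((r : ℕ) + 1) := hkkdef r
        have hbrm := (hb_range r).2
        omega
    · -- B conditions imply D' conditions
      intro hB i
      rcases Nat.lt_or_ge (a i) (ℓ + (i : ℕ) + 1) with hcase | hcase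
      swap
      · have := Nat.zero_le (finrank F ↥(W ⊓ D' i))
        omega
      have hilt := i.isLt
      have hage := ha_ge i
      have haim := (hrange i).2
      set e : ℕ := ℓ + (i : ℕ) + 1 - a i with he
      have he1 : 1 ≤ e := by omega
      have heℓ : e ≤ ℓ := by omega
      set r : Fin ℓ := ⟨e - 1, by omega⟩ with hr
      have hsval := hrevval r
      have hrevv : (r.rev : ℕ) = a i - (i : ℕ) - 1 := by
        rw [hsval]
        simp only [hr]
        omega
      set cs : ℕ := c r.rev with hcs
      -- F1 : a i < cs
      have hF1 : a i < cs := by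
        by_contra hcon
        push_neg at hcon
        have h1 := (hTa i (a i)).mp (le_refl _)
        have h2 := hR (a i) haim
        have h3 := (hTc r.rev (a i)).mp hcon
        omega
      have hcs2 := (hcrange r.rev).2
      -- kk r ≤ ℓ - 1 - i
      have hkk : kk r = b r - ((r : ℕ) + 1) := hkkdef r
      have hbr : b r = m + 1 - cs := by rw [hbdef r, hcs]
      have hkle : kk r ≤ ℓ - 1 - (i : ℕ) := by
        rw [hkk, hbr]; have hrv : (r : ℕ) = e - 1 := rfl
        omega
      have hkltℓ : kk r < ℓ := by omega
      have hBD : B r ≤ D' i := by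
        have h1 := hBT r
        rw [hDhat_lt (kk r) hkltℓ] at h1
        refine le_trans h1 ?_
        have h2 : Dhat (kk r) ≤ Dhat (ℓ - 1 - (i : ℕ)) := hDhatmono _ _ hkle
        rw [hDhat_lt (kk r) hkltℓ, hDhat_lt (ℓ - 1 - (i : ℕ)) (by omega)] at h2
        refine le_trans h2 ?_
        have : (⟨ℓ - 1 - (ℓ - 1 - (i : ℕ)), by omega⟩ : Fin ℓ) = i := Fin.ext (by simp; omega)
        rw [this]
      have hfin : finrank F ↥(W ⊓ B r) ≤ finrank F ↥(W ⊓ D' i) :=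
        Submodule.finrank_mono (inf_le_inf_left W hBD)
      have hBr := hB r
      have hrval : (r : ℕ) = e - 1 := rfl
      omega
  -- membership characterization via B
  have hSB : ∀ W : Submodule F (Fin m → F), W ∈ S ↔
      (finrank F ↥W = ℓ ∧ ∀ r : Fin ℓ, (r : ℕ) + 1 ≤ finrank F ↥(W ⊓ B r)) := by
    intro W
    constructor
    · intro hW
      have hWd : finrank F ↥W = ℓ := hW.1
      exact ⟨hWd, (hBd W hWd).mp ((hdual W hWd).mp hW)⟩
    · rintro ⟨hWd, h⟩
      exact (hdual W hWd).mpr ((hBd W hWd).mpr h)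
  -- comparison of indices
  have hab : ∀ j : Fin ℓ, a j ≤ b j := by
    intro j
    obtain ⟨W, hWd, hWG, hWU⟩ := build ℓ A hAmono.monotone
      (fun t => by rw [hdA t]; exact ha_ge t) (B j)
    have hWS : W ∈ S := ⟨hWd, hWG⟩
    have hBj : (j : ℕ) + 1 ≤ finrank F ↥(W ⊓ B j) := ((hSB W).mp hWS).2 j
    obtain ⟨t, hjt, hineq⟩ := hWU (j : ℕ) hBj
    rw [hdA t, hBdim j] at hineq
    have := strictMono_gap a ha j t (by rwa [Fin.le_def])
    omega
  have hba : ∀ j : Fin ℓ, b j ≤ a j := by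
    intro j
    obtain ⟨W, hWd, hWG, hWU⟩ := build ℓ B hBmono
      (fun t => by rw [hBdim t]; exact hb_ge t) (A j)
    have hWS : W ∈ S := (hSB W).mpr ⟨hWd, hWG⟩
    have hAj : (j : ℕ) + 1 ≤ finrank F ↥(W ⊓ A j) := hWS.2 j
    obtain ⟨t, hjt, hineq⟩ := hWU (j : ℕ) hAj
    rw [hdA j, hBdim t] at hineq
    have := strictMono_gap b hb_strict j t (by rwa [Fin.le_def])
    omega
  have habeq : ∀ j : Fin ℓ, a j = b j := fun j => le_antisymm (hab j) (hba j)
  -- final set equality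
  have h1 : Finset.univ.image a = Finset.univ.image b :=
    Finset.image_congr (fun x _ => habeq x)
  have h2 : Finset.univ.image b = C.image (fun j => m + 1 - j) := by
    rw [← himc, Finset.image_image]
    ext x
    simp only [Finset.mem_image, Finset.mem_univ, true_and, Function.comp]
    constructor
    · rintro ⟨r, rfl⟩; exact ⟨r.rev, (hbdef r).symm⟩
    · rintro ⟨s', rfl⟩
      refine ⟨s'.rev, ?_⟩
      rw [hbdef s'.rev, Fin.rev_rev]
  rw [h1, h2]
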